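/- Every symmetric e-merging function F is dominated by λ + (1−λ)·M_K for some λ ∈ [0,1], where M_K is the arithmetic mean; moreover F is admissible if and only if F = λ + (1−λ)·M_K with λ = F(0,…,0). -/

import Mathlib

open MeasureTheory
open scoped ENNReal NNReal BigOperators

/-- An e-merging function: an increasing Borel function `F : [0,∞)^K → [0,∞)` mapping
any `K` arbitrarily dependent e-variables to an e-variable. -/
def IsEMerging (K : ℕ) (F : (Fin K → ℝ) → ℝ) : Prop :=
  Monotone F ∧ Measurable F ∧ (∀ e, 0 ≤ F e) ∧
  ∀ (Ω : Type) [MeasurableSpace Ω] (Q : Measure Ω), IsProbabilityMeasure Q →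
    ∀ E : Fin K → Ω → ℝ, (∀ k, Measurable (E k)) → (∀ k ω, 0 ≤ E k ω) →
      (∀ k, ∫⁻ ω, ENNReal.ofReal (E k ω) ∂Q ≤ 1) →
      ∫⁻ ω, ENNReal.ofReal (F (fun k => E k ω)) ∂Q ≤ 1

/-- `G` strictly dominates `F` (as e-merging functions, on the domain `[0,∞)^K`). -/
def StrictlyDominates (K : ℕ) (G F : (Fin K → ℝ) → ℝ) : Prop :=
  (∀ e : Fin K → ℝ, (∀ k, 0 ≤ e k) → F e ≤ G e) ∧
  (∃ e : Fin K → ℝ, (∀ k, 0 ≤ e k) ∧ F e < G e)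

/-- An e-merging function is admissible if no e-merging function strictly dominates it. -/
def IsAdmissibleEMerging (K : ℕ) (F : (Fin K → ℝ) → ℝ) : Prop :=
  IsEMerging K F ∧ ¬ ∃ G, IsEMerging K G ∧ StrictlyDominates K G F

lemma emerging_mix {K : ℕ} {F : (Fin K → ℝ) → ℝ} (hF : IsEMerging K F)
    {ι : Type} [Fintype ι] (v : ι → (Fin K → ℝ)) (w : ι → ℝ)
    (hv : ∀ j k, 0 ≤ v j k) (hw : ∀ j, 0 ≤ w j) (hw1 : ∑ j, w j = 1)
    (hcoord : ∀ k, ∑ j, w j * v j k ≤ 1) :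
    ∑ j, w j * F (v j) ≤ 1 := by
  letI : MeasurableSpace ι := ⊤
  set Q : Measure ι := ∑ j : ι, (ENNReal.ofReal (w j)) • Measure.dirac j with hQ
  have hlint : ∀ g : ι → ℝ≥0∞, ∫⁻ x, g x ∂Q = ∑ j, ENNReal.ofReal (w j) * g j := by
    intro g
    rw [hQ, lintegral_finset_sum_measure]
    refine Finset.sum_congr rfl fun j _ => ?_
    rw [lintegral_smul_measure, lintegral_dirac' _ (fun s _ => MeasurableSpace.measurableSet_top), smul_eq_mul]
  have hprob : IsProbabilityMeasure Q := by
    constructor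
    have := hlint 1
    simpa [lintegral_one, ← ENNReal.ofReal_sum_of_nonneg (fun j _ => hw j), hw1] using this
  have key := hF.2.2.2 ι Q hprob (fun k j => v j k) (fun k s _ => MeasurableSpace.measurableSet_top)
    (fun k j => hv j k) ?_ 
  · rw [hlint] at key
    have : ∑ j, ENNReal.ofReal (w j) * ENNReal.ofReal (F (v j))
        = ENNReal.ofReal (∑ j, w j * F (v j)) := by
      rw [ENNReal.ofReal_sum_of_nonneg (fun j _ => mul_nonneg (hw j) (hF.2.2.1 _))]
      exact Finset.sum_congr rfl fun j _ => (ENNReal.ofReal_mul (hw j)).symm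
    rw [this] at key
    exact ENNReal.ofReal_le_one.mp key
  · intro k
    rw [hlint]
    have : ∑ j, ENNReal.ofReal (w j) * ENNReal.ofReal (v j k)
        = ENNReal.ofReal (∑ j, w j * v j k) := by
      rw [ENNReal.ofReal_sum_of_nonneg (fun j _ => mul_nonneg (hw j) (hv j k))]
      exact Finset.sum_congr rfl fun j _ => (ENNReal.ofReal_mul (hw j)).symm
    rw [this]
    exact ENNReal.ofReal_le_one.mpr (hcoord k)

lemma emerging_sym_mix {K n : ℕ} (hK : K ≠ 0) {F : (Fin K → ℝ) → ℝ} (hF : IsEMerging K F)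
    (hsymm : ∀ (e : Fin K → ℝ) (σ : Equiv.Perm (Fin K)), F (e ∘ σ) = F e)
    (u : Fin n → (Fin K → ℝ)) (c : Fin n → ℝ)
    (hu : ∀ j k, 0 ≤ u j k) (hc : ∀ j, 0 ≤ c j) (hc1 : ∑ j, c j = 1)
    (hmean : ∑ j, c j * ((∑ k, u j k) / K) ≤ 1) :
    ∑ j, c j * F (u j) ≤ 1 := by
  haveI : NeZero K := ⟨hK⟩
  have hKpos : (0:ℝ) < K := by positivity
  have key := emerging_mix hF (fun p : Fin n × Fin K => u p.1 ∘ (Equiv.addLeft p.2))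
      (fun p => c p.1 / K) (fun j k => hu _ _)
      (fun j => div_nonneg (hc j.1) hKpos.le) ?_ ?_
  · calc ∑ j, c j * F (u j)
        = ∑ p : Fin n × Fin K, c p.1 / K * F (u p.1 ∘ (Equiv.addLeft p.2)) := by
          rw [Fintype.sum_prod_type]
          refine Finset.sum_congr rfl fun j _ => ?_
          simp only [hsymm, Finset.sum_const, Finset.card_univ, Fintype.card_fin,
            nsmul_eq_mul]
          field_simp
      _ ≤ 1 := key
  · rw [Fintype.sum_prod_type]
    simp only [Finset.sum_const, Finset.card_univ, Fintype.card_fin, nsmul_eq_mul]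
    rw [← hc1]
    refine Finset.sum_congr rfl fun j _ => ?_
    field_simp
  · intro k
    calc ∑ p : Fin n × Fin K, c p.1 / K * (u p.1 ∘ (Equiv.addLeft p.2)) k
        = ∑ j, c j * ((∑ i, u j i) / K) := by
          rw [Fintype.sum_prod_type]
          refine Finset.sum_congr rfl fun j _ => ?_
          simp only [Function.comp_apply, Equiv.coe_addLeft]
          rw [← Finset.mul_sum]
          have hs : ∑ y : Fin K, u j (y + k) = ∑ i, u j i := by
            simpa using Equiv.sum_comp (Equiv.addRight k) (u j)
          rw [hs]; ring
      _ ≤ 1 := hmean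

lemma exists_dominating_lambda {K : ℕ} (hK : K ≠ 0) {F : (Fin K → ℝ) → ℝ}
    (hF : IsEMerging K F)
    (hsymm : ∀ (e : Fin K → ℝ) (σ : Equiv.Perm (Fin K)), F (e ∘ σ) = F e) :
    ∃ l ∈ Set.Icc (0:ℝ) 1, ∀ e : Fin K → ℝ, (∀ k, 0 ≤ e k) →
      F e ≤ l + (1 - l) * ((∑ k, e k) / K) := by
  have hKpos : (0:ℝ) < K := by positivity
  -- F e ≤ 1 whenever mean ≤ 1
  have fact1 : ∀ e : Fin K → ℝ, (∀ k, 0 ≤ e k) → (∑ k, e k) / K ≤ 1 → F e ≤ 1 := by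
    intro e he hm
    have := emerging_sym_mix hK hF hsymm ![e] ![1] (by intro j k; fin_cases j <;> simpa using he k)
      (by intro j; fin_cases j <;> simp) (by simp) (by simpa using hm)
    simpa using this
  -- cross inequality
  have cross : ∀ (e f : Fin K → ℝ), (∀ k, 0 ≤ e k) → (∀ k, 0 ≤ f k) →
      ∀ t s : ℝ, 0 ≤ t → 0 ≤ s → t + s = 1 →
      t * ((∑ k, e k) / K) + s * ((∑ k, f k) / K) ≤ 1 →
      t * F e + s * F f ≤ 1 := by
    intro e f he hf t s ht hs hts hm
    have := emerging_sym_mix hK hF hsymm ![e, f] ![t, s]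
      (by intro j k; fin_cases j <;> simp [he k, hf k])
      (by intro j; fin_cases j <;> simp [ht, hs])
      (by simp [Fin.sum_univ_two, hts]) (by simpa [Fin.sum_univ_two] using hm)
    simpa [Fin.sum_univ_two] using this
  set M : (Fin K → ℝ) → ℝ := fun e => (∑ k, e k) / K with hM
  set S : Set ℝ := {x | ∃ e : Fin K → ℝ, (∀ k, 0 ≤ e k) ∧ M e < 1 ∧
      x = (F e - M e) / (1 - M e)} with hS
  have hM0 : M (fun _ => 0) = 0 := by simp [hM]
  have hmem0 : F (fun _ => 0) ∈ S := by
    refine ⟨fun _ => 0, fun k => le_rfl, by simp [hM0], by simp [hM0]⟩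
  have hne : S.Nonempty := ⟨_, hmem0⟩
  have hub1 : ∀ x ∈ S, x ≤ 1 := by
    rintro x ⟨e, he, hlt, rfl⟩
    rw [div_le_one (by linarith)]
    have := fact1 e he (le_of_lt hlt)
    linarith
  have hbdd : BddAbove S := ⟨1, hub1⟩
  set l : ℝ := sSup S with hl
  have hl1 : l ≤ 1 := csSup_le hne hub1
  have hl0 : 0 ≤ l := le_trans (hF.2.2.1 _) (le_csSup hbdd hmem0)
  refine ⟨l, ⟨hl0, hl1⟩, ?_⟩
  intro e he
  show F e ≤ l + (1 - l) * M e
  have hMnn : 0 ≤ M e := div_nonneg (Finset.sum_nonneg fun k _ => he k) hKpos.le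
  rcases lt_trichotomy (M e) 1 with hlt | heq | hgt
  · have hx : (F e - M e) / (1 - M e) ∈ S := ⟨e, he, hlt, rfl⟩
    have hxl : (F e - M e) / (1 - M e) ≤ l := le_csSup hbdd hx
    rw [div_le_iff₀ (by linarith)] at hxl
    nlinarith
  · have := fact1 e he (le_of_eq heq)
    rw [heq]; linarith
  · -- every element of S is ≤ (M e - F e)/(M e - 1)
    have hub2 : ∀ x ∈ S, x ≤ (M e - F e) / (M e - 1) := by
      rintro x ⟨f, hf, hblt, rfl⟩
      set a := M e
      set b := M f
      have hab : 0 < a - b := by linarith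
      have h1 := cross f e hf he ((a - 1)/(a - b)) ((1 - b)/(a - b))
        (div_nonneg (by linarith) hab.le) (div_nonneg (by linarith) hab.le)
        (by field_simp; ring)
        (by rw [div_mul_eq_mul_div, div_mul_eq_mul_div, ← add_div,
              div_le_one hab]; show (a - 1) * b + (1 - b) * a ≤ a - b; nlinarith)
      rw [div_mul_eq_mul_div, div_mul_eq_mul_div, ← add_div,
        div_le_one hab] at h1
      rw [div_le_div_iff₀ (by linarith) (by linarith)]
      nlinarith
    have hla : l ≤ (M e - F e) / (M e - 1) := csSup_le hne hub2
    rw [le_div_iff₀ (by linarith)] at hla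
    nlinarith

lemma linear_emerging {K : ℕ} (hK : K ≠ 0) {l : ℝ} (hl : l ∈ Set.Icc (0:ℝ) 1) :
    IsEMerging K (fun e => l + (1 - l) * ((∑ k, max (e k) 0) / K)) := by
  have hKpos : (0:ℝ) < K := by positivity
  have h1l : (0:ℝ) ≤ 1 - l := by linarith [hl.2]
  refine ⟨?_, ?_, ?_, ?_⟩
  · intro a b hab
    have hs : ∑ k, max (a k) 0 ≤ ∑ k, max (b k) 0 :=
      Finset.sum_le_sum fun k _ => max_le_max (hab k) le_rfl
    have hdiv : (∑ k, max (a k) 0) / K ≤ (∑ k, max (b k) 0) / K := by gcongr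
    have := mul_le_mul_of_nonneg_left hdiv h1l
    simp only []
    linarith
  · apply measurable_const.add
    apply measurable_const.mul
    apply Measurable.div_const
    exact Finset.measurable_sum _ fun k _ => (measurable_pi_apply k).max measurable_const
  · intro e
    have : 0 ≤ ∑ k, max (e k) 0 := Finset.sum_nonneg fun k _ => le_max_right _ 0
    have := div_nonneg this hKpos.le
    nlinarith [hl.1]
  · intro Ω _ Q hQ E hE hpos hint
    have hptw : ∀ ω, ENNReal.ofReal (l + (1 - l) * ((∑ k, max (E k ω) 0) / K))
        = ENNReal.ofReal l + (ENNReal.ofReal (1 - l) / K) * ∑ k, ENNReal.ofReal (E k ω) := by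
      intro ω
      have h1 : ∀ k, max (E k ω) 0 = E k ω := fun k => max_eq_left (hpos k ω)
      have hsum : (0:ℝ) ≤ ∑ k, max (E k ω) 0 := Finset.sum_nonneg fun k _ => le_max_right _ 0
      rw [ENNReal.ofReal_add hl.1 (mul_nonneg h1l (div_nonneg hsum hKpos.le)),
        ENNReal.ofReal_mul h1l, ENNReal.ofReal_div_of_pos hKpos,
        ENNReal.ofReal_sum_of_nonneg (fun k _ => le_max_right _ 0)]
      simp only [h1, ENNReal.ofReal_natCast]
      rw [div_eq_mul_inv, ENNReal.div_eq_inv_mul]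
      ring
    calc ∫⁻ ω, ENNReal.ofReal (l + (1 - l) * ((∑ k, max (E k ω) 0) / K)) ∂Q
        = ∫⁻ ω, (ENNReal.ofReal l
            + (ENNReal.ofReal (1 - l) / K) * ∑ k, ENNReal.ofReal (E k ω)) ∂Q :=
          lintegral_congr hptw
      _ = ENNReal.ofReal l
            + (ENNReal.ofReal (1 - l) / K) * ∑ k, ∫⁻ ω, ENNReal.ofReal (E k ω) ∂Q := by
          rw [lintegral_add_left measurable_const, lintegral_const, measure_univ, mul_one,
            lintegral_const_mul' _ _
              (ENNReal.div_lt_top ENNReal.ofReal_ne_top (by exact_mod_cast hK)).ne,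
            lintegral_finset_sum' _ fun k _ => ((hE k).ennreal_ofReal).aemeasurable.aestronglyMeasurable.aemeasurable]
      _ ≤ ENNReal.ofReal l + (ENNReal.ofReal (1 - l) / K) * ∑ _k : Fin K, (1:ℝ≥0∞) := by
          gcongr
          exact hint _
      _ = ENNReal.ofReal l + (ENNReal.ofReal (1 - l) / K) * K := by
          simp
      _ ≤ 1 := by
          rw [ENNReal.div_mul_cancel (by exact_mod_cast hK) (by finiteness),
            ← ENNReal.ofReal_one, ← ENNReal.ofReal_add hl.1 h1l]
          simp

/-- every symmetric e-merging function `F` is dominated by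
`λ + (1−λ)·M_K` for some `λ ∈ [0,1]`; moreover `F` is admissible iff
`F = λ + (1−λ)·M_K` on `[0,∞)^K` with `λ = F(0,…,0) ∈ [0,1]`. -/
theorem symmetric_e_merging_complete_class
    (K : ℕ) (hK : 2 ≤ K) (F : (Fin K → ℝ) → ℝ) (hF : IsEMerging K F)
    (hsymm : ∀ (e : Fin K → ℝ) (σ : Equiv.Perm (Fin K)), F (e ∘ σ) = F e) :
    (∃ l ∈ Set.Icc (0:ℝ) 1, ∀ e : Fin K → ℝ, (∀ k, 0 ≤ e k) →
      F e ≤ l + (1 - l) * ((∑ k, e k) / K)) ∧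
    (IsAdmissibleEMerging K F ↔
      (F (fun _ => 0) ∈ Set.Icc (0:ℝ) 1 ∧
        ∀ e : Fin K → ℝ, (∀ k, 0 ≤ e k) →
          F e = F (fun _ => 0) + (1 - F (fun _ => 0)) * ((∑ k, e k) / K))) := by
  haveI : NeZero K := ⟨by omega⟩
  have hK0 : K ≠ 0 := by omega
  have hKpos : (0:ℝ) < K := by positivity
  obtain ⟨l, hlI, hdom⟩ := exists_dominating_lambda hK0 hF hsymm
  refine ⟨⟨l, hlI, hdom⟩, ?_, ?_⟩
  · -- admissible → equality
    intro hAdm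
    set G : (Fin K → ℝ) → ℝ := fun e => l + (1 - l) * ((∑ k, max (e k) 0) / K) with hG
    have hGE : IsEMerging K G := linear_emerging hK0 hlI
    have hGeq : ∀ e : Fin K → ℝ, (∀ k, 0 ≤ e k) →
        G e = l + (1 - l) * ((∑ k, e k) / K) := by
      intro e he
      simp only [hG]
      rw [Finset.sum_congr rfl fun k _ => max_eq_left (he k)]
    have hFG : ∀ e : Fin K → ℝ, (∀ k, 0 ≤ e k) → F e = G e := by
      intro e he
      by_contra hne
      have hlt : F e < G e := lt_of_le_of_ne (by rw [hGeq e he]; exact hdom e he) hne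
      exact hAdm.2 ⟨G, hGE, fun f hf => (hGeq f hf) ▸ hdom f hf, e, he, hlt⟩
    have h0 : F (fun _ => 0) = l := by
      rw [hFG _ (fun _ => le_rfl), hGeq _ (fun _ => le_rfl)]
      simp
    refine ⟨h0 ▸ hlI, fun e he => ?_⟩
    rw [h0, hFG e he, hGeq e he]
  · -- equality → admissible
    rintro ⟨h0I, heq⟩
    refine ⟨hF, ?_⟩
    rintro ⟨G, hGE, hdomF, e, he, hlt⟩
    set l0 : ℝ := F (fun _ => 0) with hl0
    set m : ℝ := (∑ k, e k) / K with hm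
    have hmnn : 0 ≤ m := div_nonneg (Finset.sum_nonneg fun k _ => he k) hKpos.le
    set t : ℝ := 1 / (2 * max m 1) with ht
    set s : ℝ := (1 - t * m) / 2 with hs
    have hmax1 : (1:ℝ) ≤ max m 1 := le_max_right _ _
    have htpos : 0 < t := by positivity
    have htm : t * m ≤ 1 / 2 := by
      rw [ht, div_mul_eq_mul_div, one_mul, div_le_div_iff₀ (by positivity) (by norm_num)]
      have : m ≤ max m 1 := le_max_left _ _
      nlinarith
    have hthalf : t ≤ 1 / 2 := by
      rw [ht, div_le_div_iff₀ (by positivity) (by norm_num)]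
      nlinarith
    have hsnn : 0 ≤ s := by rw [hs]; linarith
    have hts1 : t + s ≤ 1 := by rw [hs]; nlinarith
    set v : Fin K ⊕ Bool → (Fin K → ℝ) := Sum.elim (fun i => e ∘ (Equiv.addLeft i))
      (fun b => if b then (fun _ => (2:ℝ)) else (fun _ => 0)) with hv
    set w : Fin K ⊕ Bool → ℝ := Sum.elim (fun _ => t / K)
      (fun b => if b then s else 1 - t - s) with hw
    have hvnn : ∀ j k, 0 ≤ v j k := by
      rintro (i | b) k
      · exact he _
      · cases b <;> simp [hv]
    have hwnn : ∀ j, 0 ≤ w j := by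
      rintro (i | b)
      · exact div_nonneg htpos.le hKpos.le
      · cases b <;> simp [hw, hsnn] <;> linarith
    have hw1 : ∑ j, w j = 1 := by
      rw [Fintype.sum_sum_type]
      simp only [hw, Sum.elim_inl, Sum.elim_inr, Fintype.sum_bool, if_true, if_false, Bool.false_eq_true,
        Finset.sum_const, Finset.card_univ, Fintype.card_fin, nsmul_eq_mul]
      field_simp
      ring
    have hsum_shift : ∀ k : Fin K, ∑ i : Fin K, e (i + k) = ∑ i, e i := by
      intro k
      simpa using Equiv.sum_comp (Equiv.addRight k) e
    have hcoord : ∀ k, ∑ j, w j * v j k ≤ 1 := by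
      intro k
      rw [Fintype.sum_sum_type]
      simp only [hw, hv, Sum.elim_inl, Sum.elim_inr, Fintype.sum_bool, if_true,
        Function.comp_apply, Equiv.coe_addLeft]
      rw [if_neg (by simp), if_neg (by simp), ← Finset.mul_sum, hsum_shift]
      have h1 : t / K * (∑ i, e i) = t * m := by rw [hm]; ring
      rw [h1]
      rw [hs]
      linarith
    have key := emerging_mix hGE v w hvnn hwnn hw1 hcoord
    -- value of F at the mixture points
    have hFshift : ∀ i : Fin K, F (e ∘ (Equiv.addLeft i)) = F e := fun i => hsymm e _
    have hFe : F e = l0 + (1 - l0) * m := heq e he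
    have hF2 : F (fun _ => (2:ℝ)) = l0 + (1 - l0) * 2 := by
      have := heq (fun _ => (2:ℝ)) (fun _ => by norm_num)
      rw [this]
      congr 1
      congr 1
      rw [Finset.sum_const, Finset.card_univ, Fintype.card_fin, nsmul_eq_mul]
      field_simp
    have hF0 : F (fun _ => (0:ℝ)) = l0 := rfl
    have hFsum : ∑ j, w j * F (v j) = 1 := by
      rw [Fintype.sum_sum_type]
      simp only [hw, hv, Sum.elim_inl, Sum.elim_inr, Fintype.sum_bool, if_true, if_false, Bool.false_eq_true,
        hFshift, hF2, hF0, Finset.sum_const, Finset.card_univ, Fintype.card_fin,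
        nsmul_eq_mul, hFe]
      rw [hs]
      field_simp
      ring
    have hstrict : ∑ j, w j * F (v j) < ∑ j, w j * G (v j) := by
      refine Finset.sum_lt_sum (fun j _ => ?_) ⟨Sum.inl 0, Finset.mem_univ _, ?_⟩
      · exact mul_le_mul_of_nonneg_left (hdomF _ (hvnn j)) (hwnn j)
      · have hv0 : v (Sum.inl (0 : Fin K)) = e := by
          funext k
          simp [hv]
        rw [hv0]
        simp only [hw, Sum.elim_inl]
        exact mul_lt_mul_of_pos_left hlt (by positivity)
    rw [hFsum] at hstrict
    exact absurd key (not_le.mpr hstrict)
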